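/- Let R be a Noetherian ring of prime characteristic p, I₁,…,I_t ⊆ R ideals, and J_• a p-family of ideals with I₁,…,I_t ⊆ √J₁. Setting V(p^e) = {a ∈ ℕ^t : I₁^{a₁}⋯I_t^{a_t} ⊄ J_{p^e}}, the limit lim_{e→∞} |V(p^e)|/p^{et} exists (as a real number). This limit is called the F-volume Vol_F^{J_•}(I₁,…,I_t). -/

import Mathlib

open Ideal Filter MeasureTheory

/-- The `q`-th Frobenius power of an ideal: the ideal generated by `q`-th powers of its
elements (used with `q = p ^ e`). -/
def Ideal.frobPow {R : Type*} [CommRing R] (J : Ideal R) (q : ℕ) : Ideal R :=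
  Ideal.span ((fun a => a ^ q) '' (J : Set R))

/-- The set `V` of exponent vectors `a ∈ ℕ^t` with `I₁^{a₁} ⋯ I_t^{a_t} ⊄ J'`. -/
def Vnu {R : Type*} [CommRing R] {t : ℕ} (I : Fin t → Ideal R) (J' : Ideal R) :
    Set (Fin t → ℕ) :=
  {a | ¬ (∏ i, I i ^ a i) ≤ J'}



namespace FVAux
variable {R : Type*} [CommRing R]

lemma mem_frobPow {J : Ideal R} {x : R} (hx : x ∈ J) (q : ℕ) : x ^ q ∈ J.frobPow q :=
  Ideal.subset_span ⟨x, hx, rfl⟩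

lemma frobPow_mono {J K : Ideal R} (h : J ≤ K) (q : ℕ) : J.frobPow q ≤ K.frobPow q :=
  Ideal.span_mono (Set.image_mono h)

lemma frobPow_top (q : ℕ) : (⊤ : Ideal R).frobPow q = ⊤ := by
  rw [Ideal.eq_top_iff_one]
  simpa using mem_frobPow (J := (⊤ : Ideal R)) (x := 1) trivial q

lemma frobPow_mul_le (A B : Ideal R) (q : ℕ) :
    A.frobPow q * B.frobPow q ≤ (A * B).frobPow q := by
  rw [Ideal.frobPow, Ideal.frobPow, Ideal.span_mul_span']
  rw [Ideal.span_le]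
  rintro z ⟨x, ⟨a, ha, rfl⟩, y, ⟨b, hb, rfl⟩, rfl⟩
  show a ^ q * b ^ q ∈ _
  rw [← mul_pow]
  exact mem_frobPow (Ideal.mul_mem_mul ha hb) q

lemma frobPow_pow_le (A : Ideal R) (q b : ℕ) :
    A.frobPow q ^ b ≤ (A ^ b).frobPow q := by
  induction b with
  | zero => simp [frobPow_top]
  | succ b ih =>
      rw [pow_succ, pow_succ]
      exact le_trans (Ideal.mul_mono ih le_rfl) (frobPow_mul_le _ _ q)

lemma frobPow_prod_le {ι : Type*} (s : Finset ι) (K : ι → Ideal R) (q : ℕ) :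
    (∏ i ∈ s, (K i).frobPow q) ≤ (∏ i ∈ s, K i).frobPow q := by
  classical
  induction s using Finset.induction with
  | empty => simp [frobPow_top]
  | insert _ _ hx ih =>
      rw [Finset.prod_insert hx, Finset.prod_insert hx]
      exact le_trans (Ideal.mul_mono le_rfl ih) (frobPow_mul_le _ _ q)

lemma prod_pow_mem {ι : Type*} (A : Ideal R) (s : Finset ι) (g : ι → R) (d : ι → ℕ)
    (h : ∀ x ∈ s, g x ∈ A) : (∏ x ∈ s, g x ^ d x) ∈ A ^ (∑ x ∈ s, d x) := by
  classical
  induction s using Finset.induction with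
  | empty => simp [Ideal.one_eq_top]
  | @insert a s ha ih =>
      rw [Finset.prod_insert ha, Finset.sum_insert ha, pow_add]
      exact Ideal.mul_mem_mul (Ideal.pow_mem_pow (h a (Finset.mem_insert_self a s)) _)
        (ih fun x hx => h x (Finset.mem_insert_of_mem hx))


lemma core (K : Ideal R) (s : Finset R) (hs : Ideal.span ↑s = K) (q b : ℕ) (hq : 0 < q) :
    K ^ (q * b + s.card * (q - 1)) ≤ (K ^ b).frobPow q := by
  classical
  set m := q * b + s.card * (q - 1) with hm
  conv_lhs => rw [← hs]
  rw [Ideal.span, Submodule.span_pow, Submodule.span_le]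
  intro y hy
  rw [Set.mem_pow] at hy
  obtain ⟨f, hf⟩ := hy
  rw [List.prod_ofFn] at hf
  set cnt : R → ℕ := fun x => (Finset.univ.filter fun i => (f i : R) = x).card with hcnt
  have hmaps : ∀ i ∈ (Finset.univ : Finset (Fin m)), (f i : R) ∈ s := fun i _ => (f i).2
  have h1 : (∏ x ∈ s, x ^ cnt x) = ∏ i, (f i : R) := by
    rw [← Finset.prod_fiberwise_of_maps_to hmaps (fun i => (f i : R))]
    refine Finset.prod_congr rfl fun x hx => ?_
    rw [hcnt]
    rw [← Finset.prod_const]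
    exact Finset.prod_congr rfl fun i hi => (Finset.mem_filter.mp hi).2.symm
  have h2 : (∑ x ∈ s, cnt x) = m := by
    have := Finset.card_eq_sum_card_fiberwise hmaps
    simpa using this.symm
  have h3 : b ≤ ∑ x ∈ s, cnt x / q := by
    have hb : ∀ x ∈ s, cnt x ≤ q * (cnt x / q) + (q - 1) := by
      intro x _
      have h4 := Nat.div_add_mod (cnt x) q
      have h5 := Nat.mod_lt (cnt x) hq
      omega
    have h6 : (∑ x ∈ s, cnt x) ≤ ∑ x ∈ s, (q * (cnt x / q) + (q - 1)) :=
      Finset.sum_le_sum hb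
    rw [Finset.sum_add_distrib, ← Finset.mul_sum, Finset.sum_const, smul_eq_mul, h2, hm] at h6
    have : q * b ≤ q * ∑ x ∈ s, cnt x / q := by omega
    exact Nat.le_of_mul_le_mul_left this hq
  have hyeq : y = (∏ x ∈ s, (x ^ q) ^ (cnt x / q)) * ∏ x ∈ s, x ^ (cnt x % q) := by
    rw [← Finset.prod_mul_distrib, ← hf, ← h1]
    refine Finset.prod_congr rfl fun x _ => ?_
    rw [← pow_mul, ← pow_add, Nat.div_add_mod]
  have hsK : ∀ x ∈ s, x ∈ K := fun x hx => hs ▸ Ideal.subset_span hx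
  have hmem : (∏ x ∈ s, (x ^ q) ^ (cnt x / q)) ∈ (K.frobPow q) ^ (∑ x ∈ s, cnt x / q) :=
    prod_pow_mem _ _ _ _ fun x hx => mem_frobPow (hsK x hx) q
  have hfin : (∏ x ∈ s, (x ^ q) ^ (cnt x / q)) ∈ (K ^ b).frobPow q :=
    frobPow_pow_le K q b (Ideal.pow_le_pow_right h3 hmem)
  rw [hyeq]
  exact Ideal.mul_mem_right _ _ hfin


lemma prod_mono {ι : Type*} (s : Finset ι) (f g : ι → Ideal R) (h : ∀ i ∈ s, f i ≤ g i) :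
    ∏ i ∈ s, f i ≤ ∏ i ∈ s, g i := by
  classical
  induction s using Finset.induction with
  | empty => simp
  | @insert a s ha ih =>
      rw [Finset.prod_insert ha, Finset.prod_insert ha]
      exact Ideal.mul_mono (h a (Finset.mem_insert_self a s))
        (ih fun i hi => h i (Finset.mem_insert_of_mem hi))

end FVAux

namespace FVAux2

lemma box_eq {t : ℕ} (N : Fin t → ℕ) :
    {a : Fin t → ℕ | ∀ j, a j < N j} = ↑(Fintype.piFinset fun j => Finset.Iio (N j)) := by
  ext a
  simp [Fintype.mem_piFinset]

lemma box_finite {t : ℕ} (N : Fin t → ℕ) : {a : Fin t → ℕ | ∀ j, a j < N j}.Finite := by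
  rw [box_eq]; exact Finset.finite_toSet _

lemma ncard_le_of_subset_box {t : ℕ} {X : Set (Fin t → ℕ)} (N : Fin t → ℕ)
    (h : X ⊆ {a | ∀ j, a j < N j}) : X.ncard ≤ ∏ j, N j := by
  refine le_trans (Set.ncard_le_ncard h (box_finite N)) ?_
  rw [box_eq, Set.ncard_coe_finset, Fintype.card_piFinset]
  simp

lemma finite_of_subset_box {t : ℕ} {X : Set (Fin t → ℕ)} (N : Fin t → ℕ)
    (h : X ⊆ {a | ∀ j, a j < N j}) : X.Finite :=
  (box_finite N).subset h

lemma ncard_prod_univ {α β : Type*} (s : Set α) :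
    (s ×ˢ (Set.univ : Set β)).ncard = s.ncard * Nat.card β := by
  rw [← Nat.card_coe_set_eq, ← Nat.card_coe_set_eq,
    Nat.card_congr (Equiv.Set.prod s Set.univ), Nat.card_prod,
    Nat.card_congr (Equiv.Set.univ β)]

lemma ncard_biUnion_le {α ι : Type*} (s : Finset ι) (f : ι → Set α) :
    (⋃ i ∈ s, f i).ncard ≤ ∑ i ∈ s, (f i).ncard := by
  classical
  induction s using Finset.induction with
  | empty => simp
  | @insert a s ha ih =>
      rw [Finset.set_biUnion_insert, Finset.sum_insert ha]
      exact le_trans (Set.ncard_union_le _ _) (by omega)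

end FVAux2

open FVAux FVAux2 in
/-- Existence of the F-volume: `lim_e |V(p^e)| / p^{e t}` converges. -/
theorem stmt2 {R : Type*} [CommRing R] [IsNoetherianRing R] (p : ℕ) [Fact p.Prime]
    [CharP R p] {t : ℕ} (I : Fin t → Ideal R) (J : ℕ → Ideal R)
    (hfam : ∀ e, (J e).frobPow p ≤ J (e + 1))
    (hrad : ∀ i, I i ≤ (J 0).radical) :
    ∃ V : ℝ, Tendsto (fun e : ℕ => ((Vnu I (J e)).ncard : ℝ) / (p : ℝ) ^ (e * t))
      atTop (nhds V) := by
  classical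
  have hp2 : 2 ≤ p := (Fact.out : p.Prime).two_le
  have hp0 : 0 < p := by omega
  choose S hS using fun i => IsNoetherian.noetherian (I i)
  obtain ⟨n, hn⟩ := Ideal.exists_radical_pow_le_of_fg (J 0) (IsNoetherian.noetherian _)
  set c : Fin t → ℕ := fun i => (S i).card * (p - 1) with hc
  -- fact1 : powers of I i eventually land in J e
  have fact1 : ∀ i e, ∃ m, m + c i ≤ (n + c i) * p ^ e ∧ I i ^ m ≤ J e := by
    intro i e
    induction e with
    | zero =>
        refine ⟨n, by simp, ?_⟩
        exact le_trans (Ideal.pow_right_mono (hrad i) n) hn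
    | succ e ih =>
        obtain ⟨m, hm1, hm2⟩ := ih
        refine ⟨p * m + c i, ?_, ?_⟩
        · have h1 : p * m + c i + c i ≤ p * (m + c i) := by nlinarith
          have h2 : p * (m + c i) ≤ p * ((n + c i) * p ^ e) := by
            exact Nat.mul_le_mul_left p hm1
          have h3 : p * ((n + c i) * p ^ e) = (n + c i) * p ^ (e + 1) := by ring
          omega
        · calc I i ^ (p * m + c i) ≤ (I i ^ m).frobPow p := core (I i) (S i) (hS i) p m hp0
            _ ≤ (J e).frobPow p := frobPow_mono hm2 p
            _ ≤ J (e + 1) := hfam e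
  -- fact3 : box bound
  have fact3 : ∀ e a, a ∈ Vnu I (J e) → ∀ i, a i < (n + c i) * p ^ e := by
    intro e a ha i
    by_contra hcon
    push_neg at hcon
    obtain ⟨m, hm1, hm2⟩ := fact1 i e
    refine ha ?_
    calc (∏ j, I j ^ a j) ≤ Finset.univ.inf (fun j => I j ^ a j) := Ideal.prod_le_inf
      _ ≤ I i ^ a i := Finset.inf_le (Finset.mem_univ i)
      _ ≤ I i ^ m := Ideal.pow_le_pow_right (by omega)
      _ ≤ J e := hm2
  -- fact2 : recursion
  have fact2 : ∀ e a, a ∈ Vnu I (J (e + 1)) → (fun i => (a i - c i) / p) ∈ Vnu I (J e) := by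
    intro e a ha
    intro hb
    refine ha ?_
    set b : Fin t → ℕ := fun i => (a i - c i) / p with hbdef
    calc (∏ i, I i ^ a i) ≤ ∏ i, (I i ^ b i).frobPow p := by
          refine prod_mono _ _ _ fun i _ => ?_
          by_cases hlt : a i < c i
          · have hb0 : b i = 0 := by
              simp only [hbdef]
              have : a i - c i = 0 := by omega
              simp [this]
            rw [hb0, pow_zero, Ideal.one_eq_top, frobPow_top]
            exact le_top
          · push_neg at hlt
            have hdm : p * b i ≤ a i - c i := by
              rw [mul_comm]; exact Nat.div_mul_le_self _ _
            have hci : c i = (S i).card * (p - 1) := by rw [hc]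
            have hle : p * b i + (S i).card * (p - 1) ≤ a i := by omega
            calc I i ^ a i ≤ I i ^ (p * b i + (S i).card * (p - 1)) :=
                  Ideal.pow_le_pow_right hle
              _ ≤ (I i ^ b i).frobPow p := core (I i) (S i) (hS i) p (b i) hp0
      _ ≤ (∏ i, I i ^ b i).frobPow p := frobPow_prod_le _ _ p
      _ ≤ (J e).frobPow p := frobPow_mono hb p
      _ ≤ J (e + 1) := hfam e
  set Vs : ℕ → Set (Fin t → ℕ) := fun e => Vnu I (J e) with hVs
  have hbox : ∀ e, Vs e ⊆ {a | ∀ j, a j < (n + c j) * p ^ e} := fun e a ha j => fact3 e a ha j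
  have hfin : ∀ e, (Vs e).Finite := fun e => finite_of_subset_box _ (hbox e)
  set cm := Finset.univ.sup c with hcm
  set CM := Finset.univ.sup (fun j : Fin t => n + c j) with hCM
  have hcount : ∀ e, (Vs (e+1)).ncard ≤
      p ^ t * (Vs e).ncard + t * (cm * (CM * p ^ (e+1)) ^ (t - 1)) := by
    intro e
    set A : Set (Fin t → ℕ) := {a | a ∈ Vs (e+1) ∧ ∀ i, c i ≤ a i} with hA
    set Rst : Set (Fin t → ℕ) :=
      ⋃ i ∈ (Finset.univ : Finset (Fin t)), {a | a ∈ Vs (e+1) ∧ a i < c i} with hR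
    have hsub : Vs (e+1) ⊆ A ∪ Rst := by
      intro a ha
      by_cases h : ∀ i, c i ≤ a i
      · exact Or.inl ⟨ha, h⟩
      · push_neg at h
        obtain ⟨i, hi⟩ := h
        exact Or.inr (Set.mem_biUnion (Finset.mem_univ i) ⟨ha, hi⟩)
    have hAcard : A.ncard ≤ (Vs e).ncard * p ^ t := by
      have hmaps : ∀ a ∈ A,
          ((fun i => (a i - c i) / p), (fun i => (⟨(a i - c i) % p, Nat.mod_lt _ hp0⟩ : Fin p)))
            ∈ (Vs e) ×ˢ (Set.univ : Set (Fin t → Fin p)) :=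
        fun a ha => ⟨fact2 e a ha.1, trivial⟩
      have hinj : Set.InjOn (fun a => ((fun i => (a i - c i) / p),
          (fun i => (⟨(a i - c i) % p, Nat.mod_lt _ hp0⟩ : Fin p)))) A := by
        intro a ha a' ha' hee
        have h1 := congrArg Prod.fst hee
        have h2 := congrArg Prod.snd hee
        funext i
        have e1 : (a i - c i) / p = (a' i - c i) / p := congrFun h1 i
        have e2 : (a i - c i) % p = (a' i - c i) % p := Fin.mk.inj_iff.mp (congrFun h2 i)
        have d1 := Nat.div_add_mod (a i - c i) p
        have d2 := Nat.div_add_mod (a' i - c i) p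
        rw [e1, e2] at d1
        have g1 := ha.2 i
        have g2 := ha'.2 i
        omega
      have hle := Set.ncard_le_ncard_of_injOn _ hmaps hinj ((hfin e).prod Set.finite_univ)
      rwa [ncard_prod_univ, Nat.card_eq_fintype_card, Fintype.card_fun, Fintype.card_fin,
        Fintype.card_fin] at hle
    have hRcard : Rst.ncard ≤ t * (cm * (CM * p ^ (e+1)) ^ (t - 1)) := by
      refine le_trans (ncard_biUnion_le _ _) ?_
      have hone : ∀ i : Fin t,
          {a | a ∈ Vs (e+1) ∧ a i < c i}.ncard ≤ cm * (CM * p ^ (e+1)) ^ (t - 1) := by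
        intro i
        set N : Fin t → ℕ := fun j => if j = i then c i else CM * p ^ (e+1) with hN
        have hsub2 : {a | a ∈ Vs (e+1) ∧ a i < c i} ⊆ {a | ∀ j, a j < N j} := by
          rintro a ⟨ha, hi⟩ j
          by_cases hji : j = i
          · subst hji; simp [hN, hi]
          · simp only [hN, hji, if_false]
            exact lt_of_lt_of_le (fact3 _ _ ha j)
              (Nat.mul_le_mul_right _ (Finset.le_sup (f := fun j : Fin t => n + c j)
                (Finset.mem_univ j)))
        refine le_trans (ncard_le_of_subset_box _ hsub2) ?_
        rw [← Finset.mul_prod_erase _ _ (Finset.mem_univ i)]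
        have hNi : N i = c i := by simp [hN]
        have hrest : ∏ j ∈ Finset.univ.erase i, N j = (CM * p ^ (e+1)) ^ (t - 1) := by
          have hcg : ∀ j ∈ Finset.univ.erase i, N j = CM * p ^ (e+1) := fun j hj => by
            simp only [hN, (Finset.mem_erase.mp hj).1, if_false]
          rw [Finset.prod_congr rfl hcg, Finset.prod_const,
            Finset.card_erase_of_mem (Finset.mem_univ i), Finset.card_univ, Fintype.card_fin]
        rw [hNi, hrest]
        exact Nat.mul_le_mul_right _ (Finset.le_sup (Finset.mem_univ i))
      refine le_trans (Finset.sum_le_sum fun i _ => hone i) ?_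
      rw [Finset.sum_const, Finset.card_univ, Fintype.card_fin]
      simp
    have hfinA : A.Finite := (hfin (e+1)).subset fun a ha => ha.1
    have hfinR : Rst.Finite := Set.Finite.biUnion (Finset.finite_toSet _)
      (fun i _ => (hfin (e+1)).subset fun a ha => ha.1)
    calc (Vs (e+1)).ncard ≤ (A ∪ Rst).ncard := Set.ncard_le_ncard hsub (hfinA.union hfinR)
      _ ≤ A.ncard + Rst.ncard := Set.ncard_union_le _ _
      _ ≤ p ^ t * (Vs e).ncard + t * (cm * (CM * p ^ (e+1)) ^ (t - 1)) := by
          rw [mul_comm (p ^ t)]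
          omega
  -- analysis
  set F : ℕ → ℝ := fun e => ((Vs e).ncard : ℝ) / (p : ℝ) ^ (e * t) with hF
  have hpR2 : (2:ℝ) ≤ (p:ℝ) := by exact_mod_cast hp2
  have hppos : (0:ℝ) < (p:ℝ) := by linarith
  set r : ℝ := (p:ℝ)⁻¹ with hr
  have hr0 : 0 ≤ r := by rw [hr]; positivity
  have hrhalf : r ≤ 1/2 := by
    rw [hr]
    rw [inv_le_comm₀ (by linarith) (by norm_num)]
    norm_num
    linarith
  set D : ℝ := (t:ℝ) * (cm:ℝ) * (CM:ℝ) ^ (t-1) with hD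
  have hD0 : 0 ≤ D := by rw [hD]; positivity
  have hstep : ∀ e, F (e+1) ≤ F e + D * r ^ (e+1) := by
    intro e
    have hcR : ((Vs (e+1)).ncard : ℝ) ≤ (p:ℝ)^t * ((Vs e).ncard : ℝ)
        + (t:ℝ) * ((cm:ℝ) * ((CM:ℝ) * (p:ℝ)^(e+1))^(t-1)) := by
      exact_mod_cast hcount e
    have hP : (0:ℝ) < (p:ℝ) ^ ((e+1)*t) := by positivity
    have key1 : F e * (p:ℝ)^((e+1)*t) = (p:ℝ)^t * ((Vs e).ncard : ℝ) := by
      rw [hF]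
      have hsplit : (p:ℝ)^((e+1)*t) = (p:ℝ)^(e*t) * (p:ℝ)^t := by
        rw [← pow_add]; congr 1; ring
      rw [hsplit]
      have hne : (p:ℝ)^(e*t) ≠ 0 := by positivity
      field_simp
    have key2 : (t:ℝ) * ((cm:ℝ) * ((CM:ℝ) * (p:ℝ)^(e+1))^(t-1))
        ≤ D * r^(e+1) * (p:ℝ)^((e+1)*t) := by
      rcases Nat.eq_zero_or_pos t with ht0 | ht1
      · subst ht0
        rw [hD]
        norm_num
      · obtain ⟨s, rfl⟩ : ∃ s, t = s + 1 := ⟨t - 1, by omega⟩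
        apply le_of_eq
        have hsplit : (p:ℝ)^((e+1)*(s+1)) = ((p:ℝ)^(e+1))^s * (p:ℝ)^(e+1) := by
          rw [show (e+1)*(s+1) = (e+1)*s + (e+1) from by ring, pow_add, pow_mul]
        rw [hsplit, hD, hr, show (s+1)-1 = s from rfl]
        have hne : ((p:ℝ))^(e+1) ≠ 0 := by positivity
        field_simp
        have hp1 : (p:ℝ) * (p:ℝ)⁻¹ = 1 := mul_inv_cancel₀ (by positivity)
        have hpe : (p:ℝ)^e * (p:ℝ)⁻¹^e = 1 := by rw [← mul_pow, hp1, one_pow]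
        linear_combination (-((cm:ℝ) * (CM:ℝ)^s * (p:ℝ)^(e*s) * (p:ℝ)^s) * ((p:ℝ)^e * (p:ℝ)⁻¹^e)) * hp1
          + (-((cm:ℝ) * (CM:ℝ)^s * (p:ℝ)^(e*s) * (p:ℝ)^s)) * hpe
    rw [hF]
    rw [div_le_iff₀ hP]
    rw [add_mul]
    calc ((Vs (e+1)).ncard : ℝ) ≤ (p:ℝ)^t * ((Vs e).ncard : ℝ)
          + (t:ℝ) * ((cm:ℝ) * ((CM:ℝ) * (p:ℝ)^(e+1))^(t-1)) := hcR
      _ ≤ F e * (p:ℝ)^((e+1)*t) + D * r^(e+1) * (p:ℝ)^((e+1)*t) := by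
          rw [key1]; linarith [key2]
  set G : ℕ → ℝ := fun e => F e + (2*D) * r^e with hG
  have hGanti : ∀ e, G (e+1) ≤ G e := by
    intro e
    have h1 := hstep e
    have hre : r^(e+1) = r * r^e := by rw [pow_succ]; ring
    have hrn : (0:ℝ) ≤ r^e := pow_nonneg hr0 e
    have h2 : (3:ℝ)*(D*r^(e+1)) ≤ 2*D*r^e := by
      rw [hre]
      nlinarith [mul_le_mul_of_nonneg_left hrhalf (mul_nonneg hD0 hrn), mul_nonneg hD0 hrn]
    simp only [hG]
    linarith
  have hanti : Antitone G := antitone_nat_of_succ_le hGanti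
  have hbdd : BddBelow (Set.range G) := by
    refine ⟨0, ?_⟩
    rintro x ⟨e, rfl⟩
    have h1 : (0:ℝ) ≤ F e := by rw [hF]; positivity
    have h2 : (0:ℝ) ≤ (2*D) * r^e := by positivity
    simp only [hG]
    linarith
  have hGt := tendsto_atTop_ciInf hanti hbdd
  have hrt : Tendsto (fun e : ℕ => (2*D) * r^e) atTop (nhds 0) := by
    have h := tendsto_pow_atTop_nhds_zero_of_lt_one hr0 (by linarith : r < 1)
    simpa using h.const_mul (2*D)
  have hFt : Tendsto F atTop (nhds (⨅ e, G e)) := by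
    have h := hGt.sub hrt
    simp only [hG] at h ⊢
    simpa using h
  exact ⟨⨅ e, G e, hFt⟩
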